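/- The minimal elements of the activation classes of a bidirected graph are pairwise incomparable in the activation order, consist only of backsteps, and correspond to the identity permutation on the vertex set. -/

import Mathlib

open scoped Classical

/-- An oriented hypergraph on vertex set `V`: edges `E`, incidences `I`,
incidence function given by `vtx` and `edge`, and incidence orientations `sgn`. -/
structure OrientedHypergraph (V : Type) [Fintype V] [DecidableEq V] where
  E : Type
  I : Type
  [fintypeE : Fintype E]
  [fintypeI : Fintype I]
  [decEqI : DecidableEq I]
  vtx : I → V
  edge : I → E
  sgn : I → ℤ

attribute [instance] OrientedHypergraph.fintypeE OrientedHypergraph.fintypeI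
  OrientedHypergraph.decEqI

variable {V : Type} [Fintype V] [DecidableEq V]

/-- A bidirected graph: an oriented hypergraph in which every edge has exactly two
incidences, recorded by the fixed-point-free involution `τ` pairing the two
incidences of each edge. -/
structure Bidirected (V : Type) [Fintype V] [DecidableEq V]
    extends OrientedHypergraph V where
  τ : I → I
  τ_invol : ∀ i, τ (τ i) = i
  τ_ne : ∀ i, τ i ≠ i
  τ_edge : ∀ i, edge (τ i) = edge i
  edge_two : ∀ i j, edge i = edge j → j = i ∨ j = τ i

/-- A pre-contributor: an incidence-preserving map of `|V|` disjoint directed paths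
of length one into `G`, sending the tail `t_v` to `v`.  The component at `v` is the
weak walk with tail incidence `i1 v` and head incidence `i2 v`. -/
structure PreContributor (G : OrientedHypergraph V) where
  i1 : V → G.I
  i2 : V → G.I
  tail_eq : ∀ v, G.vtx (i1 v) = v
  edge_eq : ∀ v, G.edge (i1 v) = G.edge (i2 v)

namespace PreContributor

variable {G : OrientedHypergraph V}

/-- The head vertex of the component of `p` at `v`: `p(h_v)`. -/
def head (p : PreContributor G) (v : V) : V := G.vtx (p.i2 v)

/-- A contributor: a pre-contributor whose heads cover `V`, `{p(h_v) | v ∈ V} = V`. -/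
def IsContributor (p : PreContributor G) : Prop := Function.Surjective p.head

/-- The component of `p` at `v` is a backstep `(v,i,e,i,v)`. -/
def BackstepAt (p : PreContributor G) (v : V) : Prop := p.i2 v = p.i1 v

/-- The sign of the length-one weak walk of `p` at `v`. -/
def walkSign (p : PreContributor G) (v : V) : ℤ := -(G.sgn (p.i1 v) * G.sgn (p.i2 v))

/-- Two vertices lie in the same component of the image of `p`. -/
def compRel (p : PreContributor G) : V → V → Prop :=
  Relation.EqvGen (fun v w => p.head v = w)

/-- The setoid of components of `p`. -/
def compSetoid (p : PreContributor G) : Setoid V := Relation.EqvGen.setoid (fun v w => p.head v = w)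

/-- A component class is a (lone) backstep. -/
def IsBackstepClass (p : PreContributor G) (q : Quotient p.compSetoid) : Prop :=
  ∃ v, Quotient.mk p.compSetoid v = q ∧ p.head v = v ∧ p.BackstepAt v

/-- The number of vertices in a component class. -/
noncomputable def compCard (p : PreContributor G) (q : Quotient p.compSetoid) : ℕ :=
  Nat.card {v : V // Quotient.mk p.compSetoid v = q}

/-- The sign of a component class: the product of the signs of its weak walks. -/
noncomputable def compSign (p : PreContributor G) (q : Quotient p.compSetoid) : ℤ :=
  ∏ᶠ v ∈ {v : V | Quotient.mk p.compSetoid v = q}, p.walkSign v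

/-- `tc`: total number of circles of a contributor (backsteps do not count). -/
noncomputable def tc (p : PreContributor G) : ℕ :=
  Nat.card {q : Quotient p.compSetoid // ¬ p.IsBackstepClass q}

/-- `pc`: number of positive circles of a contributor. -/
noncomputable def pc (p : PreContributor G) : ℕ :=
  Nat.card {q : Quotient p.compSetoid // ¬ p.IsBackstepClass q ∧ p.compSign q = 1}

/-- `nc`: number of negative circles of a contributor. -/
noncomputable def nc (p : PreContributor G) : ℕ :=
  Nat.card {q : Quotient p.compSetoid // ¬ p.IsBackstepClass q ∧ p.compSign q = -1}

/-- `oc`: number of odd circles of a contributor. -/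
noncomputable def oc (p : PreContributor G) : ℕ :=
  Nat.card {q : Quotient p.compSetoid // ¬ p.IsBackstepClass q ∧ Odd (p.compCard q)}

/-- `ec`: number of even circles of a contributor. -/
noncomputable def ec (p : PreContributor G) : ℕ :=
  Nat.card {q : Quotient p.compSetoid // ¬ p.IsBackstepClass q ∧ Even (p.compCard q)}

end PreContributor

/-- The `V × E` incidence matrix of an oriented hypergraph. -/
noncomputable def OrientedHypergraph.inc (G : OrientedHypergraph V) : Matrix V G.E ℤ :=
  fun v e => ∑ᶠ i ∈ {i : G.I | G.vtx i = v ∧ G.edge i = e}, G.sgn i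

/-- The oriented hypergraphic Laplacian `L_G = H_G H_Gᵀ`. -/
noncomputable def OrientedHypergraph.lap (G : OrientedHypergraph V) : Matrix V V ℤ :=
  G.inc * G.inc.transpose

namespace Bidirected

variable {G : Bidirected V}

/-- Packing the directed adjacency of `p` at `v` into a backstep. -/
def pack (G : Bidirected V) (p : PreContributor G.toOrientedHypergraph) (v : V) :
    PreContributor G.toOrientedHypergraph where
  i1 := p.i1
  i2 := fun u => if u = v then p.i1 v else p.i2 u
  tail_eq := p.tail_eq
  edge_eq := fun u => by by_cases h : u = v <;> simp [h, p.edge_eq u]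

/-- Unpacking the backstep of `p` at `v` into the unique directed adjacency out of
`v` completing the edge. -/
def unpack (G : Bidirected V) (p : PreContributor G.toOrientedHypergraph) (v : V) :
    PreContributor G.toOrientedHypergraph where
  i1 := p.i1
  i2 := fun u => if u = v then G.τ (p.i1 v) else p.i2 u
  tail_eq := p.tail_eq
  edge_eq := fun u => by
    by_cases h : u = v
    · simp [h, G.τ_edge]
    · simp [h, p.edge_eq u]

end Bidirected
namespace Bidirected

variable {V : Type} [Fintype V] [DecidableEq V]

/-- A sequence of vertices is a valid sequence of unpackings from `p`:
each step unpacks a backstep. -/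
def UnpackSeqOK (G : Bidirected V) :
    PreContributor G.toOrientedHypergraph → List V → Prop
  | _, [] => True
  | p, v :: l => p.BackstepAt v ∧ UnpackSeqOK G (G.unpack p v) l

/-- A sequence of vertices is a valid sequence of packings from `p`:
each step packs a directed adjacency. -/
def PackSeqOK (G : Bidirected V) :
    PreContributor G.toOrientedHypergraph → List V → Prop
  | _, [] => True
  | p, v :: l => ¬ p.BackstepAt v ∧ PackSeqOK G (G.pack p v) l

/-- `d` is obtained from `c` by activating a circle: a minimal sequence of
unpackings producing a new contributor, which has one more circle. -/
def Activates (G : Bidirected V) (c d : PreContributor G.toOrientedHypergraph) : Prop :=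
  c.IsContributor ∧ d.IsContributor ∧
    ∃ l : List V, G.UnpackSeqOK c l ∧ List.foldl G.unpack c l = d ∧
      d.tc = c.tc + 1 ∧
      ∀ l' : List V, l' <+: l → l' ≠ [] → l' ≠ l →
        ¬ (List.foldl G.unpack c l').IsContributor

/-- `d` is obtained from `c` by deactivating a circle: a minimal sequence of
packings producing a new contributor, which has one fewer circle. -/
def Deactivates (G : Bidirected V) (c d : PreContributor G.toOrientedHypergraph) : Prop :=
  c.IsContributor ∧ d.IsContributor ∧
    ∃ l : List V, G.PackSeqOK c l ∧ List.foldl G.pack c l = d ∧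
      c.tc = d.tc + 1 ∧
      ∀ l' : List V, l' <+: l → l' ≠ [] → l' ≠ l →
        ¬ (List.foldl G.pack c l').IsContributor

/-- The activation partial order `≤_a`. -/
def leA (G : Bidirected V) : PreContributor G.toOrientedHypergraph →
    PreContributor G.toOrientedHypergraph → Prop :=
  Relation.ReflTransGen G.Activates

/-- Activation equivalence `~_a`; its classes are the activation classes. -/
def ActEq (G : Bidirected V) (c d : PreContributor G.toOrientedHypergraph) : Prop :=
  G.leA c d ∨ G.leA d c

/-- Two vertices are linked by an edge of `G`. -/
def linkR (G : Bidirected V) (v w : V) : Prop :=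
  ∃ i : G.I, G.vtx i = v ∧ G.vtx (G.τ i) = w

/-- Every connected component of `G` contains at least one adjacency
(an edge whose two incidences lie at two distinct vertices). -/
def EveryComponentHasAdjacency (G : Bidirected V) : Prop :=
  ∀ v : V, ∃ w : V, Relation.EqvGen G.linkR v w ∧
    ∃ i : G.I, G.vtx i = w ∧ G.vtx (G.τ i) ≠ w

end Bidirected


section MinAux

variable {V : Type} [Fintype V] [DecidableEq V] {G : Bidirected V}

open PreContributor Function

lemma PCext {p q : PreContributor G.toOrientedHypergraph} (h1 : p.i1 = q.i1)
    (h2 : p.i2 = q.i2) : p = q := by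
  cases p; cases q; cases h1; cases h2; rfl

lemma foldl_pack_i1 (p : PreContributor G.toOrientedHypergraph) (l : List V) :
    (List.foldl G.pack p l).i1 = p.i1 := by
  induction l generalizing p with
  | nil => rfl
  | cons a l ih => exact ih (G.pack p a)

lemma foldl_pack_i2 (p : PreContributor G.toOrientedHypergraph) (l : List V) (u : V) :
    (List.foldl G.pack p l).i2 u = if u ∈ l then p.i1 u else p.i2 u := by
  induction l generalizing p with
  | nil => simp
  | cons a l ih =>
    simp only [List.foldl_cons, ih (G.pack p a), List.mem_cons]
    by_cases h : u ∈ l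
    · simp [h, Bidirected.pack]
    · by_cases h2 : u = a <;> simp [h, h2, Bidirected.pack]

lemma foldl_unpack_i1 (p : PreContributor G.toOrientedHypergraph) (l : List V) :
    (List.foldl G.unpack p l).i1 = p.i1 := by
  induction l generalizing p with
  | nil => rfl
  | cons a l ih => exact ih (G.unpack p a)

lemma foldl_unpack_i2 (p : PreContributor G.toOrientedHypergraph) (l : List V) (u : V) :
    (List.foldl G.unpack p l).i2 u = if u ∈ l then G.τ (p.i1 u) else p.i2 u := by
  induction l generalizing p with
  | nil => simp
  | cons a l ih =>
    simp only [List.foldl_cons, ih (G.unpack p a), List.mem_cons]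
    by_cases h : u ∈ l
    · simp [h, Bidirected.unpack]
    · by_cases h2 : u = a <;> simp [h, h2, Bidirected.unpack]

lemma foldl_pack_head (p : PreContributor G.toOrientedHypergraph) (l : List V) (u : V) :
    (List.foldl G.pack p l).head u = if u ∈ l then u else p.head u := by
  unfold PreContributor.head
  rw [foldl_pack_i2]
  by_cases h : u ∈ l <;> simp [h, p.tail_eq u]

lemma pack_backstepAt_iff (p : PreContributor G.toOrientedHypergraph) {a u : V} (h : u ≠ a) :
    (G.pack p a).BackstepAt u ↔ p.BackstepAt u := by
  unfold PreContributor.BackstepAt Bidirected.pack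
  simp [h]

lemma packSeqOK_of : ∀ (m : List V) (p : PreContributor G.toOrientedHypergraph),
    m.Nodup → (∀ u ∈ m, ¬ p.BackstepAt u) → G.PackSeqOK p m
  | [], p, _, _ => trivial
  | a :: m, p, hn, hb => by
    refine ⟨hb a (by simp), packSeqOK_of m (G.pack p a) hn.of_cons ?_⟩
    intro u hu
    have hua : u ≠ a := fun h => (List.nodup_cons.1 hn).1 (h ▸ hu)
    rw [pack_backstepAt_iff p hua]
    exact hb u (List.mem_cons_of_mem _ hu)

lemma unpackSeqOK_backstep : ∀ (l : List V) (p : PreContributor G.toOrientedHypergraph),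
    G.UnpackSeqOK p l → ∀ u ∈ l, p.BackstepAt u
  | [], _, _, u, hu => absurd hu (by simp)
  | a :: l, p, ⟨hb, hok⟩, u, hu => by
    rcases List.mem_cons.1 hu with rfl | hu
    · exact hb
    · have h2 := unpackSeqOK_backstep l _ hok u hu
      by_cases hua : u = a
      · subst hua
        exfalso
        apply G.τ_ne (p.i1 u)
        simpa [PreContributor.BackstepAt, Bidirected.unpack] using h2
      · simpa [PreContributor.BackstepAt, Bidirected.unpack, hua] using h2

lemma unpackSeqOK_nodup : ∀ (l : List V) (p : PreContributor G.toOrientedHypergraph),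
    G.UnpackSeqOK p l → l.Nodup
  | [], _, _ => List.nodup_nil
  | a :: l, p, ⟨_, hok⟩ => by
    refine List.nodup_cons.2 ⟨fun ha => ?_, unpackSeqOK_nodup l _ hok⟩
    have h2 := unpackSeqOK_backstep l _ hok a ha
    exact G.τ_ne (p.i1 a)
      (by simpa [PreContributor.BackstepAt, Bidirected.unpack] using h2)

lemma compRel_iterate (p : PreContributor G.toOrientedHypergraph) (u : V) :
    ∀ m : ℕ, p.compRel u (p.head^[m] u)
  | 0 => Relation.EqvGen.refl u
  | m + 1 =>
    Relation.EqvGen.trans _ _ _ (compRel_iterate p u m)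
      (Relation.EqvGen.rel _ _ (Function.iterate_succ_apply' _ _ _).symm)

lemma compRel_iff (p : PreContributor G.toOrientedHypergraph) (u w : V) :
    p.compRel u w ↔ ∃ m n : ℕ, p.head^[m] u = p.head^[n] w := by
  constructor
  · intro h
    induction h with
    | rel x y hxy => exact ⟨1, 0, by simpa using hxy⟩
    | refl x => exact ⟨0, 0, rfl⟩
    | symm x y _ ih => obtain ⟨m, n, h⟩ := ih; exact ⟨n, m, h.symm⟩
    | trans x y z _ _ ih1 ih2 =>
      obtain ⟨m, n, h1⟩ := ih1
      obtain ⟨m', n', h2⟩ := ih2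
      refine ⟨m' + m, n + n', ?_⟩
      rw [Function.iterate_add_apply, h1, ← Function.iterate_add_apply,
        Nat.add_comm m' n, Function.iterate_add_apply, h2, ← Function.iterate_add_apply]
  · rintro ⟨m, n, h⟩
    exact Relation.EqvGen.trans _ _ _ (h ▸ compRel_iterate p u m)
      (Relation.EqvGen.symm _ _ (compRel_iterate p w n))

lemma mk_eq_mk (p : PreContributor G.toOrientedHypergraph) {u w : V} :
    Quotient.mk p.compSetoid u = Quotient.mk p.compSetoid w ↔ p.compRel u w :=
  ⟨fun h => Quotient.exact h, fun h => Quotient.sound h⟩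

lemma exists_deactivates (c : PreContributor G.toOrientedHypergraph)
    (hc : c.IsContributor) (v : V) (hv : ¬ c.BackstepAt v) :
    ∃ d, G.Deactivates c d := by
  classical
  set f := c.head with hf_def
  have hinj : Function.Injective f := Finite.injective_iff_surjective.2 hc
  -- v is a periodic point of f
  have hper : v ∈ Function.periodicPts f := by
    obtain ⟨i, j, hne, hij⟩ := Finite.exists_ne_map_eq_of_infinite (fun n : ℕ => f^[n] v)
    rcases hne.lt_or_gt with h | h
    · refine ⟨j - i, by omega, ?_⟩
      have : f^[i] (f^[j - i] v) = f^[i] v := by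
        rw [← Function.iterate_add_apply]
        have : i + (j - i) = j := by omega
        rw [this, hij]
      exact (hinj.iterate i this)
    · refine ⟨i - j, by omega, ?_⟩
      have : f^[j] (f^[i - j] v) = f^[j] v := by
        rw [← Function.iterate_add_apply]
        have : j + (i - j) = i := by omega
        rw [this, ← hij]
      exact (hinj.iterate j this)
  set k := Function.minimalPeriod f v with hk_def
  have hk0 : 0 < k := Function.minimalPeriod_pos_of_mem_periodicPts hper
  have hkv : f^[k] v = v := Function.iterate_minimalPeriod
  -- distinctness of the first k iterates
  have hdist0 : ∀ i j : ℕ, i < j → j < k → f^[i] v ≠ f^[j] v := by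
    intro i j hij hjk h
    have h2 : f^[i] (f^[j - i] v) = f^[i] v := by
      rw [← Function.iterate_add_apply]
      have : i + (j - i) = j := by omega
      rw [this, ← h]
    have h3 : f^[j - i] v = v := hinj.iterate i h2
    have h4 : k ≤ j - i :=
      Function.IsPeriodicPt.minimalPeriod_le (by omega) h3
    omega
  have hdist : ∀ i j : ℕ, i < k → j < k → f^[i] v = f^[j] v → i = j := by
    intro i j hi hj h
    rcases Nat.lt_trichotomy i j with h' | h' | h'
    · exact absurd h (hdist0 i j h' hj)
    · exact h'
    · exact absurd h.symm (hdist0 j i h' hi)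
  set l : List V := (List.range k).map (fun i => f^[i] v) with hl_def
  have hmem : ∀ u, u ∈ l ↔ ∃ i, i < k ∧ f^[i] v = u := by
    intro u
    simp only [hl_def, List.mem_map, List.mem_range]
  have hvl : v ∈ l := (hmem v).2 ⟨0, hk0, rfl⟩
  have hl_nodup : l.Nodup := by
    refine List.Nodup.map_on ?_ List.nodup_range
    intro i hi j hj h
    exact hdist i j (List.mem_range.1 hi) (List.mem_range.1 hj) h
  -- no backsteps on the orbit
  have hbl : ∀ u ∈ l, ¬ c.BackstepAt u := by
    intro u hu hb
    obtain ⟨i, hik, rfl⟩ := (hmem u).1 hu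
    have hfix : f (f^[i] v) = f^[i] v := by
      show c.head _ = _
      rw [PreContributor.head, hb, c.tail_eq]
    rcases Nat.eq_zero_or_pos i with rfl | hi0
    · exact hv (by simpa using hb)
    · have h2 : f^[i] (f v) = f^[i] v := by
        rw [← Function.iterate_succ_apply, Function.iterate_succ_apply', hfix]
      have h3 : f v = v := hinj.iterate i h2
      have h4 : k ≤ 1 := Function.IsPeriodicPt.minimalPeriod_le Nat.one_pos h3
      omega
  -- orbit closure properties
  have hOf : ∀ u ∈ l, f u ∈ l := by
    intro u hu
    obtain ⟨i, hik, rfl⟩ := (hmem u).1 hu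
    rcases Nat.lt_or_ge (i + 1) k with h | h
    · exact (hmem _).2 ⟨i + 1, h, Function.iterate_succ_apply' f i v⟩
    · have hik' : i + 1 = k := by omega
      refine (hmem _).2 ⟨0, hk0, ?_⟩
      simp only [Function.iterate_zero_apply]
      have h5 : f (f^[i] v) = f^[i + 1] v := (Function.iterate_succ_apply' f i v).symm
      rw [h5, hik', hkv]
  have hOb : ∀ u, f u ∈ l → u ∈ l := by
    intro u hu
    obtain ⟨i, hik, hi⟩ := (hmem _).1 hu
    rcases Nat.eq_zero_or_pos i with rfl | hi0
    · have hx : f (f^[k - 1] v) = v := by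
        have e : Nat.succ (k - 1) = k := by omega
        rw [← Function.iterate_succ_apply' f (k - 1) v, e, hkv]
      have : f u = f (f^[k - 1] v) := by
        rw [hx]
        simpa using hi.symm
      exact (hmem _).2 ⟨k - 1, by omega, (hinj this).symm⟩
    · have hx : f (f^[i - 1] v) = f^[i] v := by
        have e : Nat.succ (i - 1) = i := by omega
        rw [← Function.iterate_succ_apply' f (i - 1) v, e]
      have : f u = f (f^[i - 1] v) := by rw [hx, hi]
      exact (hmem _).2 ⟨i - 1, by omega, (hinj this).symm⟩
  have hOb_it : ∀ (n : ℕ) (u : V), f^[n] u ∈ l → u ∈ l := by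
    intro n
    induction n with
    | zero => intro u hu; simpa using hu
    | succ n ih =>
      intro u hu
      rw [Function.iterate_succ_apply] at hu
      exact hOb u (ih (f u) hu)
  set d := List.foldl G.pack c l with hd_def
  have hd_i1 : d.i1 = c.i1 := foldl_pack_i1 c l
  have hd_i2 : ∀ u, d.i2 u = if u ∈ l then c.i1 u else c.i2 u := foldl_pack_i2 c l
  have hd_head : ∀ u, d.head u = if u ∈ l then u else f u := foldl_pack_head c l
  have hgl : ∀ u ∈ l, d.head u = u := by intro u hu; rw [hd_head u, if_pos hu]
  have hgnl : ∀ u, u ∉ l → d.head u = f u := by intro u hu; rw [hd_head u, if_neg hu]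
  -- d is a contributor
  have hd_contrib : d.IsContributor := by
    intro w
    by_cases hw : w ∈ l
    · exact ⟨w, hgl w hw⟩
    · obtain ⟨u, hu⟩ := hc w
      have hul : u ∉ l := fun h => hw (hu ▸ hOf u h)
      refine ⟨u, ?_⟩
      rw [hgnl u hul, hf_def]
      exact hu
  -- the class of v in c is exactly l
  have hclass_v : ∀ x, c.compRel v x ↔ x ∈ l := by
    intro x
    constructor
    · intro h
      obtain ⟨m, n, hmn⟩ := (compRel_iff c v x).1 h
      have : f^[m] v ∈ l := by
        rw [← Function.iterate_mod_minimalPeriod_eq]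
        exact (hmem _).2 ⟨m % k, Nat.mod_lt _ hk0, rfl⟩
      exact hOb_it n x (hmn ▸ this)
    · intro h
      obtain ⟨i, hik, rfl⟩ := (hmem x).1 h
      exact compRel_iterate c v i
  have hclass_out : ∀ u, u ∉ l → ∀ x, c.compRel u x → x ∉ l := by
    intro u hu x hr hx
    exact hu ((hclass_v u).1 (Relation.EqvGen.trans _ _ _ ((hclass_v x).2 hx)
      (Relation.EqvGen.symm _ _ hr)))
  -- off the orbit, iterates of d.head and f agree and stay off the orbit
  have hiter : ∀ u, u ∉ l → ∀ n : ℕ, d.head^[n] u = f^[n] u ∧ f^[n] u ∉ l := by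
    intro u hu n
    induction n with
    | zero => exact ⟨rfl, by simpa using hu⟩
    | succ n ih =>
      obtain ⟨ih1, ih2⟩ := ih
      have h1 : f^[n + 1] u ∉ l := by
        intro h
        rw [Function.iterate_succ_apply'] at h
        exact ih2 (hOb _ h)
      refine ⟨?_, h1⟩
      rw [Function.iterate_succ_apply', Function.iterate_succ_apply', ih1,
        hgnl _ ih2]
  have hd_sub : ∀ u x, d.compRel u x → c.compRel u x := by
    intro u x h
    induction h with
    | rel a b hab =>
      by_cases hal : a ∈ l
      · have : b = a := by rw [← hab, hgl a hal]
        exact this ▸ Relation.EqvGen.refl a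
      · refine Relation.EqvGen.rel _ _ ?_
        show c.head a = b
        rw [← hab, hgnl a hal, hf_def]
    | refl a => exact Relation.EqvGen.refl a
    | symm a b _ ih => exact Relation.EqvGen.symm _ _ ih
    | trans a b e _ _ ih1 ih2 => exact Relation.EqvGen.trans _ _ _ ih1 ih2
  have hrel_iff : ∀ u, u ∉ l → ∀ x, c.compRel u x ↔ d.compRel u x := by
    intro u hu x
    constructor
    · intro h
      have hx : x ∉ l := hclass_out u hu x h
      obtain ⟨m, n, hmn⟩ := (compRel_iff c u x).1 h
      refine (compRel_iff d u x).2 ⟨m, n, ?_⟩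
      rw [(hiter u hu m).1, (hiter x hx n).1]
      exact hmn
    · exact hd_sub u x
  -- classes of orbit points in d are singletons
  have hg_back : ∀ (n : ℕ) (x : V) (w : V), w ∈ l → d.head^[n] x = w → x = w := by
    intro n
    induction n with
    | zero => intro x w _ h; simpa using h
    | succ n ih =>
      intro x w hw h
      rw [Function.iterate_succ_apply] at h
      have hgx : d.head x = w := ih (d.head x) w hw h
      by_cases hx : x ∈ l
      · rw [hgl x hx] at hgx; exact hgx
      · rw [hgnl x hx] at hgx
        exact absurd (hOb x (hgx ▸ hw)) hx
  have hsing : ∀ w ∈ l, ∀ x, d.compRel w x → x = w := by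
    intro w hw x h
    obtain ⟨m, n, hmn⟩ := (compRel_iff d w x).1 h
    have h1 : d.head^[m] w = w := Function.iterate_fixed (hgl w hw) m
    have h2 : d.head^[n] x = w := by rw [← hmn, h1]
    exact hg_back n x w hw h2
  have hbs_d : ∀ w ∈ l, d.IsBackstepClass (Quotient.mk d.compSetoid w) := by
    intro w hw
    refine ⟨w, rfl, hgl w hw, ?_⟩
    show d.i2 w = d.i1 w
    rw [hd_i2 w, if_pos hw, hd_i1]
  have hnbs_v : ¬ c.IsBackstepClass (Quotient.mk c.compSetoid v) := by
    rintro ⟨u, hqu, _, hbu⟩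
    have : c.compRel u v := (mk_eq_mk c).1 hqu
    have hul : u ∈ l := (hclass_v u).1 (Relation.EqvGen.symm _ _ this)
    exact hbl u hul hbu
  -- the key backstep-class correspondence off the orbit
  have hbs_iff : ∀ u, u ∉ l →
      (c.IsBackstepClass (Quotient.mk c.compSetoid u) ↔
        d.IsBackstepClass (Quotient.mk d.compSetoid u)) := by
    intro u hu
    constructor
    · rintro ⟨w, hqw, hhw, hbw⟩
      have hrw : c.compRel w u := (mk_eq_mk c).1 hqw
      have hwl : w ∉ l :=
        hclass_out u hu w (Relation.EqvGen.symm _ _ hrw)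
      refine ⟨w, (mk_eq_mk d).2 ((hrel_iff w hwl u).1 hrw), ?_, ?_⟩
      · rw [hgnl w hwl]; exact hhw
      · show d.i2 w = d.i1 w
        rw [hd_i2 w, if_neg hwl, hd_i1]; exact hbw
    · rintro ⟨w, hqw, hhw, hbw⟩
      have hrw : d.compRel w u := (mk_eq_mk d).1 hqw
      have hcw : c.compRel w u := hd_sub w u hrw
      have hwl : w ∉ l :=
        hclass_out u hu w (Relation.EqvGen.symm _ _ hcw)
      refine ⟨w, (mk_eq_mk c).2 hcw, ?_, ?_⟩
      · have h5 : f w = w := by rw [← hgnl w hwl]; exact hhw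
        exact h5
      · show c.i2 w = c.i1 w
        have hbw' := hbw
        rw [show d.BackstepAt w ↔ d.i2 w = d.i1 w from Iff.rfl, hd_i2 w,
          if_neg hwl, hd_i1] at hbw'
        exact hbw'
  -- the class map from d-classes to c-classes
  set Φ : Quotient d.compSetoid → Quotient c.compSetoid :=
    Quotient.lift (Quotient.mk c.compSetoid)
      (fun a b h => Quotient.sound (hd_sub a b h)) with hΦ_def
  have hΦ_mk : ∀ u, Φ (Quotient.mk d.compSetoid u) = Quotient.mk c.compSetoid u :=
    fun u => rfl
  -- representatives of non-backstep d-classes avoid the orbit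
  have hout_nl : ∀ q : Quotient d.compSetoid, ¬ d.IsBackstepClass q → q.out ∉ l := by
    intro q hq hql
    exact hq (q.out_eq ▸ hbs_d q.out hql)
  -- the counting bijection
  have htc : c.tc = d.tc + 1 := by
    have hΦ_nbs : ∀ q : Quotient d.compSetoid, ¬ d.IsBackstepClass q →
        ¬ c.IsBackstepClass (Φ q) := by
      intro q hq
      have hul := hout_nl q hq
      have hq' : q = Quotient.mk d.compSetoid q.out := q.out_eq.symm
      rw [hq', hΦ_mk]
      intro hcb
      exact (hq' ▸ hq) ((hbs_iff q.out hul).1 hcb)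
    set F : Option {q : Quotient d.compSetoid // ¬ d.IsBackstepClass q} →
        {q : Quotient c.compSetoid // ¬ c.IsBackstepClass q} := fun o =>
      Option.rec ⟨Quotient.mk c.compSetoid v, hnbs_v⟩
        (fun a => ⟨Φ a.1, hΦ_nbs a.1 a.2⟩) o with hF_def
    have hkey : ∀ q : Quotient d.compSetoid, ¬ d.IsBackstepClass q →
        Φ q ≠ Quotient.mk c.compSetoid v := by
      intro q hq h1
      have hul := hout_nl q hq
      have hq'' : q = Quotient.mk d.compSetoid q.out := q.out_eq.symm
      rw [hq'', hΦ_mk] at h1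
      have : c.compRel v q.out := Relation.EqvGen.symm _ _ ((mk_eq_mk c).1 h1)
      exact hul ((hclass_v _).1 this)
    have hF_bij : Function.Bijective F := by
      constructor
      · rintro (_ | ⟨q, hq⟩) (_ | ⟨q', hq'⟩) h
        · rfl
        · exact absurd (congrArg Subtype.val h).symm (hkey q' hq')
        · exact absurd (congrArg Subtype.val h) (hkey q hq)
        · have h1 : Φ q = Φ q' := congrArg Subtype.val h
          have hul := hout_nl q hq
          have e1 : q = Quotient.mk d.compSetoid q.out := q.out_eq.symm
          have e2 : q' = Quotient.mk d.compSetoid q'.out := q'.out_eq.symm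
          rw [e1, e2, hΦ_mk, hΦ_mk] at h1
          have hcr : c.compRel q.out q'.out := (mk_eq_mk c).1 h1
          have hdr : d.compRel q.out q'.out := (hrel_iff _ hul _).1 hcr
          have : q = q' := by
            rw [e1, e2]
            exact (mk_eq_mk d).2 hdr
          subst this
          rfl
      · rintro ⟨r, hr⟩
        have hru : r = Quotient.mk c.compSetoid r.out := r.out_eq.symm
        by_cases hul : r.out ∈ l
        · refine ⟨none, Subtype.ext ?_⟩
          show Quotient.mk c.compSetoid v = r
          exact ((mk_eq_mk c).2 ((hclass_v r.out).2 hul)).trans hru.symm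
        · have hq : ¬ d.IsBackstepClass (Quotient.mk d.compSetoid r.out) := by
            intro hb
            exact (hru ▸ hr) ((hbs_iff r.out hul).2 hb)
          refine ⟨some ⟨Quotient.mk d.compSetoid r.out, hq⟩, Subtype.ext ?_⟩
          show Φ (Quotient.mk d.compSetoid r.out) = r
          exact (hΦ_mk r.out).trans hru.symm
    have h1 : Nat.card (Option {q : Quotient d.compSetoid // ¬ d.IsBackstepClass q}) =
        Nat.card {q : Quotient c.compSetoid // ¬ c.IsBackstepClass q} :=
      Nat.card_eq_of_bijective F hF_bij
    have h2 : Nat.card (Option {q : Quotient d.compSetoid // ¬ d.IsBackstepClass q}) =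
        Nat.card {q : Quotient d.compSetoid // ¬ d.IsBackstepClass q} + 1 :=
      Finite.card_option
    show Nat.card {q : Quotient c.compSetoid // ¬ c.IsBackstepClass q} =
      Nat.card {q : Quotient d.compSetoid // ¬ d.IsBackstepClass q} + 1
    rw [← h1, h2]
  -- prefix minimality
  have hprefix : ∀ l' : List V, l' <+: l → l' ≠ [] → l' ≠ l →
      ¬ (List.foldl G.pack c l').IsContributor := by
    intro l' hpre h0 hne hsurj
    set j := l'.length with hj_def
    have hjle : j ≤ k := by
      have := hpre.length_le
      simpa [hl_def] using this
    have hl' : l' = (List.range j).map (fun i => f^[i] v) := by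
      have h1 : l' = List.take j l := List.prefix_iff_eq_take.1 hpre
      rw [h1, hl_def, ← List.map_take, List.take_range, Nat.min_eq_left hjle]
    have hjk : j < k := by
      rcases Nat.lt_or_ge j k with h | h
      · exact h
      · exact absurd (by rw [hl', (by omega : j = k), hl_def]) hne
    have hj0 : 0 < j := by
      rcases Nat.eq_zero_or_pos j with h | h
      · exact absurd (List.length_eq_zero_iff.1 (hj_def ▸ h)) h0
      · exact h
    have hmem' : ∀ u, u ∈ l' ↔ ∃ i, i < j ∧ f^[i] v = u := by
      intro u
      simp only [hl', List.mem_map, List.mem_range]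
    have hhead : ∀ u, (List.foldl G.pack c l').head u = if u ∈ l' then u else f u :=
      foldl_pack_head c l'
    obtain ⟨u, hu⟩ := hsurj (f^[j] v)
    have hwnot : f^[j] v ∉ l' := by
      intro h
      obtain ⟨i, hij, hi⟩ := (hmem' _).1 h
      exact absurd (hdist i j (by omega) hjk hi) (by omega)
    by_cases hul : u ∈ l'
    · rw [hhead u, if_pos hul] at hu
      exact hwnot (hu ▸ hul)
    · rw [hhead u, if_neg hul] at hu
      have hx : f u = f (f^[j - 1] v) := by
        have e : Nat.succ (j - 1) = j := by omega
        rw [← Function.iterate_succ_apply' f (j - 1) v, e, hu]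
      exact hul ((hmem' u).2 ⟨j - 1, by omega, (hinj hx).symm⟩)
  exact ⟨d, hc, hd_contrib, l, packSeqOK_of l c hl_nodup hbl, hd_def.symm, htc, hprefix⟩

lemma deactivates_of_activates {c d : PreContributor G.toOrientedHypergraph}
    (h : G.Activates c d) : G.Deactivates d c := by
  obtain ⟨hc, hd, l, hok, hfold, htc, hmin⟩ := h
  have hbs : ∀ u ∈ l, c.BackstepAt u := unpackSeqOK_backstep l c hok
  have hnd : l.Nodup := unpackSeqOK_nodup l c hok
  have hd_i1 : d.i1 = c.i1 := by rw [← hfold]; exact foldl_unpack_i1 c l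
  have hd_i2 : ∀ u, d.i2 u = if u ∈ l then G.τ (c.i1 u) else c.i2 u := by
    intro u; rw [← hfold]; exact foldl_unpack_i2 c l u
  refine ⟨hd, hc, l.reverse, ?_, ?_, htc, ?_⟩
  · refine packSeqOK_of l.reverse d (List.nodup_reverse.2 hnd) ?_
    intro u hu
    rw [List.mem_reverse] at hu
    intro hb
    rw [show d.BackstepAt u ↔ d.i2 u = d.i1 u from Iff.rfl, hd_i2 u,
      if_pos hu, hd_i1] at hb
    exact G.τ_ne (c.i1 u) hb
  · refine PCext ?_ ?_
    · rw [foldl_pack_i1, hd_i1]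
    · funext u
      rw [foldl_pack_i2, hd_i1, hd_i2 u]
      by_cases hu : u ∈ l
      · rw [if_pos (List.mem_reverse.2 hu)]
        exact (hbs u hu).symm
      · rw [if_neg (fun h => hu (List.mem_reverse.1 h)), if_neg hu]
  · intro l' hpre h0 hne hcon
    obtain ⟨t, ht⟩ := hpre
    have hlrev : l = t.reverse ++ l'.reverse := by
      rw [← List.reverse_reverse l, ← ht, List.reverse_append]
    have ht0 : t.reverse ≠ [] := by
      intro h
      apply hne
      have : t = [] := by simpa using h
      rw [this, List.append_nil] at ht
      exact ht
    have htl : t.reverse ≠ l := by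
      intro h
      have h2 := congrArg List.length hlrev
      rw [h] at h2
      simp only [List.length_append, List.length_reverse] at h2
      exact h0 (List.length_eq_zero_iff.1 (by omega))
    have hpre' : t.reverse <+: l := ⟨l'.reverse, hlrev.symm⟩
    have hdisj : ∀ u ∈ l'.reverse, u ∉ t.reverse := by
      intro u hu hut
      have : l.Nodup := hnd
      rw [hlrev] at this
      exact (List.disjoint_of_nodup_append this) hut hu
    have heq : List.foldl G.pack d l' = List.foldl G.unpack c t.reverse := by
      refine PCext ?_ ?_
      · rw [foldl_pack_i1, foldl_unpack_i1, hd_i1]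
      · funext u
        rw [foldl_pack_i2, foldl_unpack_i2, hd_i1, hd_i2 u]
        by_cases hu1 : u ∈ l'
        · have hul : u ∈ l := by
            rw [hlrev]
            exact List.mem_append_right _ (List.mem_reverse.2 hu1)
          have hut : u ∉ t.reverse := hdisj u (List.mem_reverse.2 hu1)
          rw [if_pos hu1, if_neg hut]
          exact (hbs u hul).symm
        · rw [if_neg hu1]
          by_cases hul : u ∈ l
          · have hut : u ∈ t.reverse := by
              rcases List.mem_append.1 (hlrev ▸ hul) with h | h
              · exact h
              · exact absurd (List.mem_reverse.1 h) hu1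
            rw [if_pos hul, if_pos hut]
          · have hut : u ∉ t.reverse := fun h => hul (hlrev ▸ List.mem_append_left _ h)
            rw [if_neg hul, if_neg hut]
    rw [heq] at hcon
    exact hmin t.reverse hpre' ht0 htl hcon

end MinAux

/-- The minimal elements of the activation classes of a bidirected
graph consist only of backsteps (hence correspond to the identity permutation of
the vertices), and distinct minimal elements are incomparable in the activation
order. -/
theorem minimal_contributors {V : Type} [Fintype V] [DecidableEq V]
    (G : Bidirected V) :
    (∀ c : PreContributor G.toOrientedHypergraph, c.IsContributor →
      (¬ ∃ d, G.Deactivates c d) →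
      (∀ v, c.BackstepAt v) ∧ (∀ v, c.head v = v)) ∧
    (∀ c d : PreContributor G.toOrientedHypergraph, c.IsContributor → d.IsContributor →
      (¬ ∃ c', G.Deactivates c c') → (¬ ∃ d', G.Deactivates d d') →
      c ≠ d → ¬ G.leA c d) := by
  constructor
  · intro c hc hnd
    have hbs : ∀ v, c.BackstepAt v := by
      intro v
      by_contra hv
      exact hnd (exists_deactivates c hc v hv)
    refine ⟨hbs, fun v => ?_⟩
    show G.toOrientedHypergraph.vtx (c.i2 v) = v
    rw [hbs v, c.tail_eq]
  · intro c d hc hd hcmin hdmin hne hle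
    rcases Relation.ReflTransGen.cases_tail hle with h | ⟨e, _, hact⟩
    · exact hne h.symm
    · exact hdmin ⟨e, deactivates_of_activates hact⟩
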